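/- arXiv:2312.06326 — 2 statements merged into one kernel-verified Lean document; each statement's English description precedes it below -/
import Mathlib

section
/- Let G be a group and μ ∈ G an element that normally generates G (i.e., the smallest normal subgroup containing μ is G). Then the subgroup generated by all commutators [g, μ] for g ∈ G, taken as a normal subgroup, equals the commutator subgroup [G, G]. -/
open scoped commutatorElement

/-- If `μ` normally generates `G`, then the normal closure of the set of commutators
`[g, μ]` for `g ∈ G` equals the commutator subgroup `[G, G]`. -/
theorem normalClosure_commutators_eq_commutator {G : Type*} [Group G] (μ : G)
    (hμ : Subgroup.normalClosure {μ} = ⊤) :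
    Subgroup.normalClosure {c : G | ∃ g : G, c = ⁅g, μ⁆} = commutator G := by
  set N := Subgroup.normalClosure {c : G | ∃ g : G, c = ⁅g, μ⁆} with hN
  have hNnormal : N.Normal := Subgroup.normalClosure_normal
  apply le_antisymm
  · apply Subgroup.normalClosure_le_normal
    rintro c ⟨g, rfl⟩
    exact Subgroup.commutator_mem_commutator (Subgroup.mem_top g) (Subgroup.mem_top μ)
  · set π := QuotientGroup.mk' N with hπ
    have hcen : π μ ∈ Subgroup.center (G ⧸ N) := by
      rw [Subgroup.mem_center_iff]
      intro z
      induction z using QuotientGroup.induction_on with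
      | H g =>
        have hm : ⁅g, μ⁆ ∈ N := Subgroup.subset_normalClosure ⟨g, rfl⟩
        have h1 : π ⁅g, μ⁆ = 1 := (QuotientGroup.eq_one_iff _).mpr hm
        rw [map_commutatorElement] at h1
        have hc := commutatorElement_eq_one_iff_mul_comm.mp h1
        exact hc
    have htop : Subgroup.center (G ⧸ N) = ⊤ := by
      rw [eq_top_iff]
      have hsurj : Function.Surjective π := QuotientGroup.mk'_surjective N
      have h1 : (Subgroup.normalClosure {μ}).map π =
          Subgroup.normalClosure ((π : G →* G ⧸ N) '' {μ}) :=
        Subgroup.map_normalClosure _ _ hsurj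
      rw [hμ, Set.image_singleton] at h1
      have h2 : ((⊤ : Subgroup G).map π) = ⊤ := by
        rw [Subgroup.map_top_of_surjective _ hsurj]
      rw [h2] at h1
      rw [h1]
      exact Subgroup.normalClosure_le_normal (Set.singleton_subset_iff.mpr hcen)
    rw [commutator_def, Subgroup.commutator_le]
    intro g₁ _ g₂ _
    have hc : π g₁ * π g₂ = π g₂ * π g₁ := by
      have := Subgroup.mem_center_iff.mp (htop ▸ Subgroup.mem_top (π g₂)) (π g₁)
      exact this
    have h1 : π ⁅g₁, g₂⁆ = 1 := by
      rw [map_commutatorElement]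
      exact commutatorElement_eq_one_iff_mul_comm.mpr hc
    exact (QuotientGroup.eq_one_iff _).mp h1
end

section
/- Let G be a group and μ ∈ G an element that normally generates G. Then the quotient G / ⟨⟨[g,μ] : g ∈ G⟩⟩ (quotient by the normal closure of all commutators with μ) is isomorphic to the abelianization G/[G,G]. -/
open scoped commutatorElement

/-- If `μ` normally generates `G`, then the quotient of `G` by the normal closure of
all commutators `[g, μ]` is isomorphic to the abelianization of `G`. -/
theorem quotient_commutators_iso_abelianization {G : Type*} [Group G] (μ : G)
    (hμ : Subgroup.normalClosure {μ} = ⊤) :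
    Nonempty ((G ⧸ Subgroup.normalClosure {c : G | ∃ g : G, c = ⁅g, μ⁆}) ≃* Abelianization G) := by
  set N := Subgroup.normalClosure {c : G | ∃ g : G, c = ⁅g, μ⁆} with hN
  have key : N = commutator G := by
    apply le_antisymm
    · apply Subgroup.normalClosure_le_normal
      rintro c ⟨g, rfl⟩
      exact Subgroup.commutator_mem_commutator (Subgroup.mem_top g) (Subgroup.mem_top μ)
    · -- show the quotient by N is commutative
      set φ := QuotientGroup.mk' N
      have hcen : (φ μ) ∈ Subgroup.center (G ⧸ N) := by
        rw [Subgroup.mem_center_iff]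
        intro q
        induction q using QuotientGroup.induction_on with
        | H g =>
          have : ⁅g, μ⁆ ∈ N := Subgroup.subset_normalClosure ⟨g, rfl⟩
          have h1 : φ ⁅g, μ⁆ = 1 := (QuotientGroup.eq_one_iff _).2 this
          rw [map_commutatorElement] at h1
          have := commutatorElement_eq_one_iff_mul_comm.mp h1
          exact this
      have hall : ∀ g : G, φ g ∈ Subgroup.center (G ⧸ N) := by
        have : Subgroup.normalClosure {μ} ≤ (Subgroup.center (G ⧸ N)).comap φ := by
          apply Subgroup.normalClosure_le_normal
          intro x hx
          rw [Set.mem_singleton_iff] at hx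
          subst hx
          exact hcen
        intro g
        exact this (hμ ▸ Subgroup.mem_top g)
      have : ∀ a b : G ⧸ N, a * b = b * a := by
        intro a b
        induction a using QuotientGroup.induction_on with
        | H x =>
          exact (Subgroup.mem_center_iff.mp (hall x) b).symm
      letI : CommGroup (G ⧸ N) := { mul_comm := this }
      have := Abelianization.commutator_subset_ker φ
      rwa [QuotientGroup.ker_mk'] at this
  exact ⟨QuotientGroup.quotientMulEquivOfEq key⟩
end
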